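/- Let H be a real Hilbert space, N : H → H a bounded self-adjoint linear operator, L : ℝⁿ → H a bounded linear map, M an n×n real symmetric matrix, û ∈ H, x̂ ∈ ℝⁿ and ĉ ∈ ℝ, and define J(x;u) = ⟨Nu,u⟩ + 2⟨Lx,u⟩ + ⟨Mx,x⟩ + 2⟨û,u⟩ + 2⟨x̂,x⟩ + ĉ. If for every x ∈ ℝⁿ the function u ↦ J(x;u) attains its infimum over H, then for every x ∈ ℝⁿ the homogeneous functional u ↦ ⟨Nu,u⟩ + 2⟨Lx,u⟩ + ⟨Mx,x⟩ also attains its infimum over H. -/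

import Mathlib

open Matrix
open scoped RealInnerProductSpace

lemma quad_key (a b : ℝ) (h : ∀ t : ℝ, 0 ≤ a*t^2 + 2*b*t) : b = 0 := by
  have ha : 0 ≤ a := by
    by_contra h'
    push_neg at h'
    set t := (1 + 2*|b|)/(-a) with ht_def
    have hna : 0 < -a := by linarith
    have ht : 0 < t := div_pos (by positivity) hna
    have hat : a * t = -(1 + 2*|b|) := by
      rw [ht_def, mul_div_assoc', div_eq_iff hna.ne']
      ring
    have hb := le_abs_self b
    have h1 := h t
    nlinarith [mul_pos ht ht]
  by_contra hb
  have h1 := h (-b/(a+1))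
  have hpos : (0:ℝ) < a + 1 := by linarith
  have hb2 : 0 < b^2 := by positivity
  have : a * (-b/(a+1))^2 + 2*b*(-b/(a+1)) = -(b^2*(a+2))/(a+1)^2 := by
    field_simp
    ring
  rw [this] at h1
  have h2 : 0 < (b^2*(a+2))/(a+1)^2 := by positivity
  have : -(b^2*(a+2))/(a+1)^2 = -((b^2*(a+2))/(a+1)^2) := by ring
  linarith [this ▸ h1]

/-- If the inhomogeneous quadratic functional attains its infimum for every `x`,
then so does the homogeneous one (Proposition 4.2(ii)). -/
theorem stmt2 {H : Type*} [NormedAddCommGroup H] [InnerProductSpace ℝ H] [CompleteSpace H]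
    {n : ℕ} (N : H →L[ℝ] H) (hN : ∀ u v : H, ⟪N u, v⟫ = ⟪u, N v⟫)
    (L : (Fin n → ℝ) →L[ℝ] H) (M : Matrix (Fin n) (Fin n) ℝ) (hM : M.IsSymm)
    (uhat : H) (xhat : Fin n → ℝ) (chat : ℝ)
    (J J0 : (Fin n → ℝ) → H → ℝ)
    (hJ : ∀ x u, J x u =
      ⟪N u, u⟫ + 2 * ⟪L x, u⟫ + (M *ᵥ x) ⬝ᵥ x + 2 * ⟪uhat, u⟫
        + 2 * (xhat ⬝ᵥ x) + chat)
    (hJ0 : ∀ x u, J0 x u = ⟪N u, u⟫ + 2 * ⟪L x, u⟫ + (M *ᵥ x) ⬝ᵥ x)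
    (hsolv : ∀ x : Fin n → ℝ, ∃ ustar : H, ∀ u : H, J x ustar ≤ J x u) :
    ∀ x : Fin n → ℝ, ∃ ustar : H, ∀ u : H, J0 x ustar ≤ J0 x u := by
  obtain ⟨u0, hu0⟩ := hsolv 0
  -- stationarity at x = 0 : ⟪N u0 + uhat, v⟫ = 0 for all v
  have key : ∀ v : H, ⟪N u0, v⟫ + ⟪uhat, v⟫ = 0 := by
    intro v
    have := quad_key ⟪N v, v⟫ (⟪N u0, v⟫ + ⟪uhat, v⟫) ?_
    · exact this
    intro t
    have h1 := hu0 (u0 + t • v)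
    rw [hJ, hJ] at h1
    have hsym : ⟪N v, u0⟫ = ⟪N u0, v⟫ := by rw [hN v u0, real_inner_comm]
    simp only [map_add, _root_.map_smul, map_zero, inner_add_left, inner_add_right,
      inner_smul_left, inner_smul_right, RCLike.conj_to_real, inner_zero_left,
      Matrix.mulVec_zero, dotProduct_zero, zero_dotProduct] at h1 ⊢
    rw [hsym] at h1
    ring_nf at h1 ⊢
    linarith
  intro x
  obtain ⟨us, hus⟩ := hsolv x
  refine ⟨us - u0, fun u => ?_⟩
  -- the translation identity : J x (w + u0) = J0 x w + C
  have hid : ∀ w : H, J x (w + u0) =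
      J0 x w + (⟪N u0, u0⟫ + 2 * ⟪L x, u0⟫ + 2 * ⟪uhat, u0⟫ + 2 * (xhat ⬝ᵥ x) + chat) := by
    intro w
    have hk := key w
    have hsym : ⟪N w, u0⟫ = ⟪N u0, w⟫ := by rw [hN w u0, real_inner_comm]
    rw [hJ, hJ0]
    simp only [map_add, inner_add_left, inner_add_right]
    linarith
  have h1 := hus (u + u0)
  have h2 : us = (us - u0) + u0 := by abel
  rw [h2] at h1
  rw [hid, hid] at h1
  linarith
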